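/- Let I = ∫_0^∞ s^n (1+s^2)^{-n} ds. Then for every t ≥ 0: ∫_0^∞ (s^2 + t^2 - 1)(s^2 + (t+1)^2)^{-n} s^{n-2} ds = I · [ (t+1)^{1-n} + (t^2-1)(t+1)^{-1-n} ]. -/
import Mathlib

open MeasureTheory Set Real

lemma aux_integrable (n k : ℕ) (hk : (k : ℝ) < 2 * n - 1) :
    IntegrableOn (fun u : ℝ => u ^ k * (1 + u ^ 2) ^ (-(n : ℝ))) (Set.Ioi 0) := by
  have cont : Continuous fun u : ℝ => u ^ k * (1 + u ^ 2) ^ (-(n : ℝ)) := by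
    refine (continuous_pow k).mul ?_
    exact Continuous.rpow_const (by continuity) (fun x => Or.inl (by positivity))
  have h1 : IntegrableOn (fun u : ℝ => u ^ k * (1 + u ^ 2) ^ (-(n : ℝ))) (Set.Ioc 0 1) :=
    cont.integrableOn_Ioc
  have h2 : IntegrableOn (fun u : ℝ => u ^ k * (1 + u ^ 2) ^ (-(n : ℝ))) (Set.Ioi 1) := by
    have hint : IntegrableOn (fun u : ℝ => u ^ ((k : ℝ) - 2 * n)) (Set.Ioi 1) :=
      integrableOn_Ioi_rpow_of_lt (by linarith) one_pos
    refine Integrable.mono' hint cont.aestronglyMeasurable.restrict ?_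
    filter_upwards [ae_restrict_mem measurableSet_Ioi] with u hu
    have hu0 : (0:ℝ) < u := lt_trans one_pos hu
    rw [Real.norm_eq_abs, abs_of_nonneg (by positivity)]
    have hle : (1 + u ^ 2) ^ (-(n : ℝ)) ≤ (u ^ 2) ^ (-(n : ℝ)) :=
      rpow_le_rpow_of_nonpos (by positivity) (by linarith [sq_nonneg u]) (by simp)
    have heq : u ^ k * (u ^ 2) ^ (-(n : ℝ)) = u ^ ((k : ℝ) - 2 * n) := by
      rw [← rpow_natCast u k, ← rpow_natCast u 2, ← rpow_mul hu0.le, ← rpow_add hu0]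
      congr 1; ring
    calc u ^ k * (1 + u ^ 2) ^ (-(n : ℝ)) ≤ u ^ k * (u ^ 2) ^ (-(n : ℝ)) := by
          exact mul_le_mul_of_nonneg_left hle (by positivity)
      _ = u ^ ((k : ℝ) - 2 * n) := heq
  have hu : Set.Ioi (0:ℝ) = Set.Ioc 0 1 ∪ Set.Ioi 1 :=
    (Set.Ioc_union_Ioi_eq_Ioi zero_le_one).symm
  rw [hu]; exact h1.union h2

lemma aux_inv (n : ℕ) (hn : 3 ≤ n) :
    (∫ u in Set.Ioi (0:ℝ), u ^ (n - 2) * (1 + u ^ 2) ^ (-(n : ℝ))) =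
      ∫ u in Set.Ioi (0:ℝ), u ^ n * (1 + u ^ 2) ^ (-(n : ℝ)) := by
  rw [← integral_comp_rpow_Ioi (fun y : ℝ => y ^ n * (1 + y ^ 2) ^ (-(n : ℝ)))
    (p := -1) (by norm_num)]
  refine setIntegral_congr_fun measurableSet_Ioi ?_
  intro x hx
  have hx0 : (0:ℝ) < x := hx
  have h2 : (0:ℝ) < 1 + x ^ 2 := by positivity
  simp only [smul_eq_mul, abs_neg, abs_one, one_mul, rpow_neg_one]
  have e1 : (x⁻¹) ^ n = x ^ (-(n:ℝ)) := by
    rw [inv_pow, ← rpow_natCast x n, ← rpow_neg hx0.le]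
  have e2 : (1 : ℝ) + (x⁻¹) ^ 2 = (1 + x ^ 2) / x ^ 2 := by
    field_simp; ring
  have e3 : ((1 + x ^ 2) / x ^ 2) ^ (-(n:ℝ))
      = (1 + x ^ 2) ^ (-(n:ℝ)) * x ^ (2 * (n:ℝ)) := by
    rw [div_rpow h2.le (by positivity), div_eq_mul_inv, ← rpow_natCast x 2,
      ← rpow_mul hx0.le, ← rpow_neg hx0.le]
    congr 1; ring
  have e4 : x ^ ((-1:ℝ) - 1) = x ^ (-2:ℝ) := by norm_num
  rw [e1, e2, e3, e4]
  have e5 : x ^ (n - 2) = x ^ ((n:ℝ) - 2) := by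
    rw [← rpow_natCast x (n - 2), Nat.cast_sub (by omega)]
    norm_num
  rw [e5]
  rw [show x ^ (-2:ℝ) * (x ^ (-(n:ℝ)) * ((1 + x ^ 2) ^ (-(n:ℝ)) * x ^ (2 * (n:ℝ))))
      = (x ^ (-2:ℝ) * x ^ (-(n:ℝ)) * x ^ (2 * (n:ℝ))) * (1 + x ^ 2) ^ (-(n:ℝ)) by ring]
  rw [← rpow_add hx0, ← rpow_add hx0]
  congr 1; ring

/-- With `I = ∫_0^∞ sⁿ (1+s²)^{-n} ds`, for every `t ≥ 0`:
`∫_0^∞ (s² + t² - 1)(s² + (t+1)²)^{-n} s^{n-2} ds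
  = I [ (t+1)^{1-n} + (t²-1)(t+1)^{-1-n} ]`. -/
theorem statement13 (n : ℕ) (hn : 3 ≤ n) (t : ℝ) (ht : 0 ≤ t) :
    (∫ s in Set.Ioi (0 : ℝ),
        (s ^ 2 + t ^ 2 - 1) * (s ^ 2 + (t + 1) ^ 2) ^ (-(n : ℝ)) * s ^ (n - 2)) =
      (∫ s in Set.Ioi (0 : ℝ), s ^ n * (1 + s ^ 2) ^ (-(n : ℝ))) *
        ((t + 1) ^ (1 - (n : ℝ)) + (t ^ 2 - 1) * (t + 1) ^ (-1 - (n : ℝ))) := by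
  set c : ℝ := t + 1 with hc_def
  have hc : (0:ℝ) < c := by simp only [hc_def]; linarith
  set g : ℝ → ℝ := fun s => (s ^ 2 + t ^ 2 - 1) * (s ^ 2 + c ^ 2) ^ (-(n : ℝ)) * s ^ (n - 2)
    with hg_def
  have sub := integral_comp_mul_left_Ioi g 0 hc
  rw [mul_zero] at sub
  -- constants
  set K1 : ℝ := (c ^ 2) ^ (-(n:ℝ)) * c ^ (n - 2) * c ^ 2 with hK1
  set K2 : ℝ := (c ^ 2) ^ (-(n:ℝ)) * c ^ (n - 2) with hK2
  have hpoint : ∀ x ∈ Set.Ioi (0:ℝ),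
      g (c * x) = K1 * (x ^ n * (1 + x ^ 2) ^ (-(n:ℝ)))
        + (t ^ 2 - 1) * K2 * (x ^ (n - 2) * (1 + x ^ 2) ^ (-(n:ℝ))) := by
    intro x hx
    have hx0 : (0:ℝ) < x := hx
    have hbase : (c * x) ^ 2 + c ^ 2 = c ^ 2 * (1 + x ^ 2) := by ring
    have hr : ((c*x) ^ 2 + c ^ 2) ^ (-(n:ℝ))
        = (c ^ 2) ^ (-(n:ℝ)) * (1 + x ^ 2) ^ (-(n:ℝ)) := by
      rw [hbase, mul_rpow (by positivity) (by positivity)]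
    have hp : (c * x) ^ (n - 2) = c ^ (n - 2) * x ^ (n - 2) := mul_pow c x (n - 2)
    have hxn : x ^ (n - 2) * x ^ 2 = x ^ n := by
      rw [← pow_add]; congr 1; omega
    simp only [hg_def]
    rw [hr, hp, hK1, hK2]
    have : (c * x) ^ 2 + t ^ 2 - 1 = c ^ 2 * x ^ 2 + (t ^ 2 - 1) := by ring
    rw [this]
    rw [show (c ^ 2 * x ^ 2 + (t ^ 2 - 1)) * ((c ^ 2) ^ (-(n:ℝ)) * (1 + x ^ 2) ^ (-(n:ℝ)))
        * (c ^ (n - 2) * x ^ (n - 2))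
      = (c ^ 2) ^ (-(n:ℝ)) * c ^ (n - 2) * c ^ 2 * ((x ^ (n-2) * x ^ 2) * (1 + x ^ 2) ^ (-(n:ℝ)))
        + (t ^ 2 - 1) * ((c ^ 2) ^ (-(n:ℝ)) * c ^ (n - 2))
          * (x ^ (n - 2) * (1 + x ^ 2) ^ (-(n:ℝ))) by ring]
    rw [hxn]
  have hInt1 : IntegrableOn (fun x : ℝ => x ^ n * (1 + x ^ 2) ^ (-(n:ℝ))) (Set.Ioi 0) :=
    aux_integrable n n (by push_cast; linarith [show (3:ℝ) ≤ n by exact_mod_cast hn])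
  have hInt2 : IntegrableOn (fun x : ℝ => x ^ (n-2) * (1 + x ^ 2) ^ (-(n:ℝ))) (Set.Ioi 0) :=
    aux_integrable n (n-2) (by
      have h3 : (3:ℝ) ≤ n := by exact_mod_cast hn
      have : ((n-2:ℕ):ℝ) = (n:ℝ) - 2 := by rw [Nat.cast_sub (by omega)]; norm_num
      rw [this]; linarith)
  have hsplit : (∫ x in Set.Ioi (0:ℝ), g (c * x))
      = K1 * (∫ x in Set.Ioi (0:ℝ), x ^ n * (1 + x ^ 2) ^ (-(n:ℝ)))
        + (t ^ 2 - 1) * K2 * (∫ x in Set.Ioi (0:ℝ), x ^ (n-2) * (1 + x ^ 2) ^ (-(n:ℝ))) := by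
    rw [setIntegral_congr_fun measurableSet_Ioi hpoint]
    rw [integral_add ((hInt1.const_mul K1)) ((hInt2.const_mul _)),
      integral_const_mul, integral_const_mul]
  have hJ := aux_inv n hn
  have lhs_eq : (∫ s in Set.Ioi (0 : ℝ), g s)
      = c * (∫ x in Set.Ioi (0:ℝ), g (c * x)) := by
    rw [sub, smul_eq_mul, ← mul_assoc, mul_inv_cancel₀ hc.ne', one_mul]
  rw [show (∫ s in Set.Ioi (0 : ℝ),
        (s ^ 2 + t ^ 2 - 1) * (s ^ 2 + (t + 1) ^ 2) ^ (-(n : ℝ)) * s ^ (n - 2))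
      = ∫ s in Set.Ioi (0 : ℝ), g s from rfl]
  rw [lhs_eq, hsplit, hJ]
  have hcK1 : c * K1 = c ^ (1 - (n:ℝ)) := by
    rw [hK1, hK2, ← rpow_natCast c 2, ← rpow_natCast c (n-2), ← rpow_mul hc.le,
      ← rpow_add hc, ← rpow_add hc]
    nth_rewrite 1 [← rpow_one c]
    rw [← rpow_add hc]
    congr 1
    push_cast [Nat.cast_sub (show 2 ≤ n by omega)]
    ring
  have hcK2 : c * K2 = c ^ (-1 - (n:ℝ)) := by
    rw [hK2, ← rpow_natCast c 2, ← rpow_natCast c (n-2), ← rpow_mul hc.le,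
      ← rpow_add hc]
    nth_rewrite 1 [← rpow_one c]
    rw [← rpow_add hc]
    congr 1
    push_cast [Nat.cast_sub (show 2 ≤ n by omega)]
    ring
  rw [show c * (K1 * (∫ s in Set.Ioi (0 : ℝ), s ^ n * (1 + s ^ 2) ^ (-(n : ℝ)))
      + (t ^ 2 - 1) * K2 * (∫ s in Set.Ioi (0 : ℝ), s ^ n * (1 + s ^ 2) ^ (-(n : ℝ))))
    = (∫ s in Set.Ioi (0 : ℝ), s ^ n * (1 + s ^ 2) ^ (-(n : ℝ)))
      * ((c * K1) + (t ^ 2 - 1) * (c * K2)) by ring, hcK1, hcK2]
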